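/- The class of submetrizable coarse spaces is λ-stable: if (X, E) is submetrizable and (X, E') is λ-equivalent to (X, E), then (X, E') is submetrizable. -/

import Mathlib

open Set

/-- A coarse structure (ballean) on a set `X`. -/
structure CoarseStruct (X : Type*) where
  sets : Set (Set (X × X))
  diagonal_mem : Set.diagonal X ∈ sets
  diagonal_subset : ∀ E ∈ sets, Set.diagonal X ⊆ E
  comp_mem : ∀ E ∈ sets, ∀ F ∈ sets,
    {p : X × X | ∃ z, (p.1, z) ∈ E ∧ (z, p.2) ∈ F} ∈ sets
  inv_mem : ∀ E ∈ sets, {p : X × X | (p.2, p.1) ∈ E} ∈ sets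
  subset_mem : ∀ E ∈ sets, ∀ E' : Set (X × X),
    Set.diagonal X ⊆ E' → E' ⊆ E → E' ∈ sets
  cover : ∀ p : X × X, ∃ E ∈ sets, p ∈ E

namespace CoarseStruct

variable {X : Type*}

/-- The ball `E[A]` of radius `E` around `A`. -/
def ball (E : Set (X × X)) (A : Set X) : Set X := {y | ∃ a ∈ A, (a, y) ∈ E}

/-- A set is bounded if it is contained in a ball around a point. -/
def IsBounded (C : CoarseStruct X) (B : Set X) : Prop :=
  ∃ E ∈ C.sets, ∃ x : X, B ⊆ ball E {x}

/-- Closeness: `A δ B`. -/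
def Close (C : CoarseStruct X) (A B : Set X) : Prop :=
  ∃ E ∈ C.sets, A ⊆ ball E B ∧ B ⊆ ball E A

/-- Linkness: `A λ B`. -/
def Linked (C : CoarseStruct X) (A B : Set X) : Prop :=
  (C.IsBounded A ∧ C.IsBounded B) ∨
  ∃ A' B' : Set X, A' ⊆ A ∧ B' ⊆ B ∧ ¬C.IsBounded A' ∧ ¬C.IsBounded B' ∧ C.Close A' B'

def LambdaEquiv (C C' : CoarseStruct X) : Prop :=
  ∀ A B : Set X, C.Linked A B ↔ C'.Linked A B

def DeltaEquiv (C C' : CoarseStruct X) : Prop :=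
  ∀ A B : Set X, C.Close A B ↔ C'.Close A B

def Discrete (C : CoarseStruct X) : Prop :=
  ∀ E ∈ C.sets, ∃ B : Set X, C.IsBounded B ∧ ∀ x ∉ B, ball E {x} = {x}

def Large (C : CoarseStruct X) (Y : Set X) : Prop :=
  ∃ E ∈ C.sets, ball E Y = Set.univ

/-- The subballean on `Y` is discrete. -/
def DiscreteOn (C : CoarseStruct X) (Y : Set X) : Prop :=
  ∀ E ∈ C.sets, ∃ B : Set X, C.IsBounded B ∧ ∀ y ∈ Y \ B, ball E {y} ∩ Y = {y}

def CoarselyDiscrete (C : CoarseStruct X) : Prop :=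
  ∃ Y : Set X, C.Large Y ∧ C.DiscreteOn Y

def LambdaRigid (C : CoarseStruct X) : Prop :=
  ∀ C' : CoarseStruct X, LambdaEquiv C C' → C' = C

def DeltaRigid (C : CoarseStruct X) : Prop :=
  ∀ C' : CoarseStruct X, DeltaEquiv C C' → C' = C

def IsBase (C : CoarseStruct X) (B : Set (Set (X × X))) : Prop :=
  B ⊆ C.sets ∧ ∀ E ∈ C.sets, ∃ E' ∈ B, E ⊆ E'

/-- Metrizable: the coarse structure has a countable base. -/
def Metrizable (C : CoarseStruct X) : Prop :=
  ∃ B : Set (Set (X × X)), B.Countable ∧ C.IsBase B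

/-- Ordinal: the coarse structure has a base linearly ordered by inclusion. -/
def Ordinal (C : CoarseStruct X) : Prop :=
  ∃ B : Set (Set (X × X)), C.IsBase B ∧ IsChain (· ⊆ ·) B

def MacroUniform (C : CoarseStruct X) (f : X → ℝ) : Prop :=
  ∀ E ∈ C.sets, ∃ r : ℝ, 0 < r ∧
    ∀ x : X, ∀ y ∈ ball E {x}, ∀ z ∈ ball E {x}, |f y - f z| ≤ r

def Submetrizable (C : CoarseStruct X) : Prop :=
  ¬C.IsBounded Set.univ ∧ ∃ C'' : CoarseStruct X,
    C.sets ⊆ C''.sets ∧ ¬C''.IsBounded Set.univ ∧ C''.Metrizable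

def SlowlyOscillating (C : CoarseStruct X) (f : X → ℝ) : Prop :=
  ∀ E ∈ C.sets, ∀ ε : ℝ, 0 < ε → ∃ B : Set X, C.IsBounded B ∧
    ∀ x ∉ B, ∀ y ∈ ball E {x}, ∀ z ∈ ball E {x}, |f y - f z| < ε

/-- The entourage `H_{(E,Φ)}`: `H[x] = {x}` for `x ∈ Φ` and `H[x] = E[x] \ Φ` for `x ∉ Φ`. -/
def EPhiBase (E : Set (X × X)) (Φ : Set X) : Set (X × X) :=
  {p | (p.1 ∈ Φ ∧ p.1 = p.2) ∨ (p.1 ∉ Φ ∧ p.2 ∉ Φ ∧ (p.1, p.2) ∈ E)}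

/-- The family of entourages of the coarse structure `E_φ` with base `{H_{(E,Φ)}}`. -/
def EPhiSets (C : CoarseStruct X) (φ : Filter X) : Set (Set (X × X)) :=
  {E' | Set.diagonal X ⊆ E' ∧ ∃ E ∈ C.sets, ∃ Φ ∈ φ, E' ⊆ EPhiBase E Φ}

/-- The set `B♯` of ultrafilters containing the complement of every bounded set. -/
def Bsharp (C : CoarseStruct X) : Set (Ultrafilter X) :=
  {p | ∀ B : Set X, C.IsBounded B → Bᶜ ∈ p}

/-- Parallelity of ultrafilters: `p ∥ q`. -/
def Parallel (C : CoarseStruct X) (p q : Ultrafilter X) : Prop :=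
  ∃ E ∈ C.sets, ∀ P ∈ p, ball E P ∈ q

def AsympDisjoint (C : CoarseStruct X) (A B : Set X) : Prop :=
  ∀ E ∈ C.sets, C.IsBounded (ball E A ∩ ball E B)

def AsympNbhd (C : CoarseStruct X) (A U : Set X) : Prop :=
  ∀ E ∈ C.sets, C.IsBounded (ball E A \ U)

def Normal (C : CoarseStruct X) : Prop :=
  ∀ A B : Set X, C.AsympDisjoint A B →
    ∃ U V : Set X, C.AsympNbhd A U ∧ C.AsympNbhd B V ∧ Disjoint U V

end CoarseStruct

namespace LamStable

open CoarseStruct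

variable {X : Type*}

/-- Composition of relations. -/
def comp (E F : Set (X × X)) : Set (X × X) :=
  {p : X × X | ∃ z, (p.1, z) ∈ E ∧ (z, p.2) ∈ F}

/-- Inverse of a relation. -/
def inv (E : Set (X × X)) : Set (X × X) := {p : X × X | (p.2, p.1) ∈ E}

lemma mem_ball_singleton {E : Set (X × X)} {x y : X} :
    y ∈ ball E {x} ↔ (x, y) ∈ E := by
  simp [ball]

lemma comp_mem'' (C : CoarseStruct X) {E F : Set (X × X)} (hE : E ∈ C.sets)
    (hF : F ∈ C.sets) : comp E F ∈ C.sets := C.comp_mem E hE F hF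

lemma union_mem (C : CoarseStruct X) {E F : Set (X × X)} (hE : E ∈ C.sets)
    (hF : F ∈ C.sets) : E ∪ F ∈ C.sets := by
  refine C.subset_mem _ (comp_mem'' C hE hF) _ ?_ ?_
  · exact fun p hp => Or.inl (C.diagonal_subset E hE hp)
  · rintro ⟨x, y⟩ (hp | hp)
    · exact ⟨y, hp, C.diagonal_subset F hF rfl⟩
    · exact ⟨x, C.diagonal_subset E hE rfl, hp⟩

lemma inv_mem' (C : CoarseStruct X) {E : Set (X × X)} (hE : E ∈ C.sets) :
    inv E ∈ C.sets := C.inv_mem E hE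

lemma bounded_subset {C : CoarseStruct X} {A B : Set X} (hB : C.IsBounded B)
    (hAB : A ⊆ B) : C.IsBounded A := by
  obtain ⟨E, hE, x, hx⟩ := hB
  exact ⟨E, hE, x, hAB.trans hx⟩

lemma bounded_empty (C : CoarseStruct X) [Nonempty X] : C.IsBounded (∅ : Set X) := by
  obtain ⟨x⟩ := ‹Nonempty X›
  exact ⟨Set.diagonal X, C.diagonal_mem, x, by simp⟩

lemma bounded_singleton (C : CoarseStruct X) (x : X) : C.IsBounded ({x} : Set X) :=
  ⟨Set.diagonal X, C.diagonal_mem, x, by intro y hy; simp at hy; subst hy; exact mem_ball_singleton.mpr rfl⟩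

lemma bounded_union (C : CoarseStruct X) {A B : Set X} (hA : C.IsBounded A)
    (hB : C.IsBounded B) : C.IsBounded (A ∪ B) := by
  obtain ⟨E1, hE1, x1, hx1⟩ := hA
  obtain ⟨E2, hE2, x2, hx2⟩ := hB
  obtain ⟨E3, hE3, hx12⟩ := C.cover (x1, x2)
  refine ⟨E1 ∪ comp E3 E2, union_mem C hE1 (comp_mem'' C hE3 hE2), x1, ?_⟩
  rintro y (hy | hy)
  · exact mem_ball_singleton.mpr (Or.inl (mem_ball_singleton.mp (hx1 hy)))
  · exact mem_ball_singleton.mpr (Or.inr ⟨x2, hx12, mem_ball_singleton.mp (hx2 hy)⟩)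

lemma bounded_finite (C : CoarseStruct X) [Nonempty X] {A : Set X} (hA : A.Finite) :
    C.IsBounded A := by
  refine Set.Finite.induction_on (motive := fun s _ => C.IsBounded s) A hA (bounded_empty C) ?_
  intro a s _ _ ih
  rw [Set.insert_eq]
  exact bounded_union C (bounded_singleton C a) ih

/-- λ-equivalent structures have the same bounded sets. -/
lemma bounded_iff_of_lambdaEquiv {C C' : CoarseStruct X} [Nonempty X]
    (h : LambdaEquiv C C') {A : Set X} : C.IsBounded A ↔ C'.IsBounded A := by
  have key : ∀ (D D' : CoarseStruct X), LambdaEquiv D D' → D.IsBounded A → D'.IsBounded A := by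
    intro D D' hDD' hA
    have hlink : D.Linked A ∅ := Or.inl ⟨hA, bounded_empty D⟩
    rcases (hDD' A ∅).mp hlink with ⟨h1, _⟩ | ⟨A', B', _, hB', _, hB'ub, _⟩
    · exact h1
    · exact absurd (bounded_subset (bounded_empty D') hB') hB'ub
  exact ⟨key C C' h, key C' C (fun A B => (h A B).symm)⟩

lemma bounded_of_subset_ball {C : CoarseStruct X} {A B : Set X} {K : Set (X × X)}
    (hK : K ∈ C.sets) (hAB : A ⊆ ball K B) (hB : C.IsBounded B) : C.IsBounded A := by
  obtain ⟨E, hE, x, hx⟩ := hB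
  refine ⟨comp E K, comp_mem'' C hE hK, x, ?_⟩
  intro a ha
  obtain ⟨b, hb, hba⟩ := hAB ha
  exact mem_ball_singleton.mpr ⟨b, mem_ball_singleton.mp (hx hb), hba⟩

/-- A macro-uniform function is bounded on bounded sets. -/
lemma macroUniform_bounded_on {C : CoarseStruct X} {f : X → ℝ}
    (hf : C.MacroUniform f) {S : Set X} (hS : C.IsBounded S) :
    ∃ M : ℝ, ∀ s ∈ S, f s ≤ M := by
  obtain ⟨E, hE, x, hx⟩ := hS
  obtain ⟨r, -, hr⟩ := hf E hE
  refine ⟨f x + r, fun s hs => ?_⟩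
  have h1 := hr x s (hx hs) x (mem_ball_singleton.mpr (C.diagonal_subset E hE rfl))
  have := abs_le.mp h1
  linarith [this.1]

section MetricFunction

variable (C : CoarseStruct X)

/-- From a countable base, a cumulative symmetric sequence of entourages. -/
noncomputable def FSeq (e : ℕ → Set (X × X)) : ℕ → Set (X × X)
  | 0 => e 0 ∪ inv (e 0)
  | n + 1 =>
      comp (FSeq e n ∪ (e (n + 1) ∪ inv (e (n + 1))))
        (FSeq e n ∪ (e (n + 1) ∪ inv (e (n + 1))))

lemma FSeq_mem (e : ℕ → Set (X × X)) (he : ∀ n, e n ∈ C.sets) (n : ℕ) :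
    FSeq e n ∈ C.sets := by
  induction n with
  | zero => exact union_mem C (he 0) (inv_mem' C (he 0))
  | succ n ih =>
      exact comp_mem'' C (union_mem C ih (union_mem C (he (n+1)) (inv_mem' C (he (n+1)))))
        (union_mem C ih (union_mem C (he (n+1)) (inv_mem' C (he (n+1)))))

lemma FSeq_symm (e : ℕ → Set (X × X)) (n : ℕ) {x y : X}
    (h : (x, y) ∈ FSeq e n) : (y, x) ∈ FSeq e n := by
  induction n generalizing x y with
  | zero =>
      rcases h with h | h
      · exact Or.inr h
      · exact Or.inl h
  | succ n ih =>
      obtain ⟨z, hz1, hz2⟩ := h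
      have h1 : (z, x) ∈ FSeq e n ∪ (e (n+1) ∪ inv (e (n+1))) := by
        rcases hz1 with h | h | h
        · exact Or.inl (ih h)
        · exact Or.inr (Or.inr h)
        · exact Or.inr (Or.inl h)
      have h2 : (y, z) ∈ FSeq e n ∪ (e (n+1) ∪ inv (e (n+1))) := by
        rcases hz2 with h | h | h
        · exact Or.inl (ih h)
        · exact Or.inr (Or.inr h)
        · exact Or.inr (Or.inl h)
      exact ⟨z, h2, h1⟩

lemma diagonal_subset_FSeq (e : ℕ → Set (X × X)) (he : ∀ n, e n ∈ C.sets) (n : ℕ) :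
    Set.diagonal X ⊆ FSeq e n :=
  C.diagonal_subset _ (FSeq_mem C e he n)

lemma FSeq_succ_superset (e : ℕ → Set (X × X)) (he : ∀ n, e n ∈ C.sets) (n : ℕ) :
    FSeq e n ⊆ FSeq e (n + 1) := by
  rintro ⟨x, y⟩ hp
  exact ⟨y, Or.inl hp, Or.inl (diagonal_subset_FSeq C e he n rfl)⟩

lemma FSeq_mono (e : ℕ → Set (X × X)) (he : ∀ n, e n ∈ C.sets) {n m : ℕ}
    (hnm : n ≤ m) : FSeq e n ⊆ FSeq e m := by
  induction m with
  | zero => rw [Nat.le_zero.mp hnm]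
  | succ m ih =>
      rcases Nat.lt_or_ge n (m + 1) with h | h
      · exact (ih (Nat.lt_succ_iff.mp h)).trans (FSeq_succ_superset C e he m)
      · rw [Nat.le_antisymm hnm h]

lemma e_subset_FSeq (e : ℕ → Set (X × X)) (he : ∀ n, e n ∈ C.sets) (n : ℕ) :
    e n ⊆ FSeq e n := by
  cases n with
  | zero => exact Set.subset_union_left
  | succ n =>
      rintro ⟨x, y⟩ hp
      exact ⟨y, Or.inr (Or.inl hp), Or.inl (diagonal_subset_FSeq C e he n rfl)⟩

lemma FSeq_comp (e : ℕ → Set (X × X)) (n : ℕ) {x y z : X}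
    (h1 : (x, y) ∈ FSeq e n) (h2 : (y, z) ∈ FSeq e n) : (x, z) ∈ FSeq e (n + 1) :=
  ⟨y, Or.inl h1, Or.inl h2⟩

/-- Main construction: a metrizable unbounded coarse structure admits an unbounded
nonnegative macro-uniform function. -/
lemma exists_macroUniform [Nonempty X] (hub : ¬C.IsBounded Set.univ)
    (hmet : C.Metrizable) :
    ∃ f : X → ℝ, C.MacroUniform f ∧ (∀ M : ℝ, ∃ x, M < f x) ∧ ∀ x, 0 ≤ f x := by
  obtain ⟨B, hBc, hBsub, hBbase⟩ := hmet
  -- B is nonempty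
  have hBne : B.Nonempty := by
    obtain ⟨E', hE', -⟩ := hBbase _ C.diagonal_mem
    exact ⟨E', hE'⟩
  obtain ⟨e, he⟩ := Set.Countable.exists_eq_range hBc hBne
  have heMem : ∀ n, e n ∈ C.sets := fun n => hBsub (he ▸ Set.mem_range_self n)
  obtain ⟨x₀⟩ := ‹Nonempty X›
  -- every pair is covered by some FSeq
  have hcov : ∀ x : X, {n : ℕ | (x₀, x) ∈ FSeq e n}.Nonempty := by
    intro x
    obtain ⟨E, hE, hmem⟩ := C.cover (x₀, x)
    obtain ⟨E', hE', hsub⟩ := hBbase E hE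
    rw [he] at hE'
    obtain ⟨n, rfl⟩ := hE'
    exact ⟨n, e_subset_FSeq C e heMem n (hsub hmem)⟩
  set g : X → ℕ := fun x => sInf {n : ℕ | (x₀, x) ∈ FSeq e n} with hg
  have hgmem : ∀ x, (x₀, x) ∈ FSeq e (g x) := fun x => Nat.sInf_mem (hcov x)
  have hgle : ∀ x n, (x₀, x) ∈ FSeq e n → g x ≤ n := fun x n h => Nat.sInf_le h
  refine ⟨fun x => (g x : ℝ), ?_, ?_, fun x => by positivity⟩
  · -- macro-uniform
    intro E hE
    obtain ⟨E', hE', hsub⟩ := hBbase E hE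
    rw [he] at hE'
    obtain ⟨m, rfl⟩ := hE'
    have hEF : E ⊆ FSeq e m := hsub.trans (e_subset_FSeq C e heMem m)
    -- key: if (x,y) ∈ E then |g x - g y| ≤ m + 1
    have key : ∀ x y : X, (x, y) ∈ E → (g y : ℝ) ≤ g x + (m + 1) := by
      intro x y hxy
      have h1 : (x₀, y) ∈ FSeq e (max (g x) m + 1) :=
        FSeq_comp e _ (FSeq_mono C e heMem (le_max_left _ _) (hgmem x))
          (FSeq_mono C e heMem (le_max_right _ _) (hEF hxy))
      have h2 : g y ≤ max (g x) m + 1 := hgle _ _ h1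
      have h3 : max (g x) m ≤ g x + m := max_le (Nat.le_add_right _ _) (Nat.le_add_left _ _)
      have h4 : g y ≤ g x + m + 1 := h2.trans (by omega)
      have : (g y : ℝ) ≤ (g x : ℝ) + m + 1 := by exact_mod_cast h4
      linarith
    refine ⟨2 * (m + 1) + 1, by positivity, ?_⟩
    intro x y hy z hz
    rw [mem_ball_singleton] at hy hz
    have hyx : (y, x) ∈ FSeq e m := FSeq_symm e m (hEF hy)
    have hzx : (z, x) ∈ FSeq e m := FSeq_symm e m (hEF hz)
    have b1 : (g y : ℝ) ≤ g x + (m + 1) := key x y hy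
    have b2 : (g z : ℝ) ≤ g x + (m + 1) := key x z hz
    -- reverse bounds
    have key' : ∀ u : X, (u, x) ∈ FSeq e m → (g x : ℝ) ≤ g u + (m + 1) := by
      intro u hu
      have h1 : (x₀, x) ∈ FSeq e (max (g u) m + 1) :=
        FSeq_comp e _ (FSeq_mono C e heMem (le_max_left _ _) (hgmem u))
          (FSeq_mono C e heMem (le_max_right _ _) hu)
      have h2 : g x ≤ max (g u) m + 1 := hgle _ _ h1
      have h3 : g x ≤ g u + m + 1 := h2.trans (by
        have : max (g u) m ≤ g u + m := max_le (Nat.le_add_right _ _) (Nat.le_add_left _ _)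
        omega)
      exact_mod_cast h3
    have b3 : (g x : ℝ) ≤ g y + (m + 1) := key' y hyx
    have b4 : (g x : ℝ) ≤ g z + (m + 1) := key' z hzx
    rw [abs_le]
    constructor <;> nlinarith
  · -- unbounded
    intro M
    by_contra hcon
    push_neg at hcon
    obtain ⟨N, hN⟩ := exists_nat_ge M
    apply hub
    refine ⟨FSeq e N, FSeq_mem C e heMem N, x₀, fun x _ => ?_⟩
    rw [mem_ball_singleton]
    have : (g x : ℝ) ≤ N := (hcon x).trans hN
    have hgx : g x ≤ N := by exact_mod_cast this
    exact FSeq_mono C e heMem hgx (hgmem x)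

end MetricFunction

section Transfer

variable {C C' : CoarseStruct X}

/-- The key transfer lemma: a nonnegative macro-uniform function on `C` is
macro-uniform on any λ-equivalent structure `C'`. -/
lemma macroUniform_transfer [Nonempty X] (h : LambdaEquiv C C') {f : X → ℝ}
    (hf : C.MacroUniform f) (hpos : ∀ x, 0 ≤ f x) : C'.MacroUniform f := by
  intro H hH
  by_contra hcon
  push_neg at hcon
  -- witnesses with ordered values
  have hW : ∀ r : ℝ, ∃ ab : X × X,
      (∃ x, ab.1 ∈ ball H {x} ∧ ab.2 ∈ ball H {x}) ∧ r < f ab.1 - f ab.2 := by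
    intro r
    have hpos1 : (0 : ℝ) < max r 1 := lt_of_lt_of_le one_pos (le_max_right r 1)
    obtain ⟨x, y, hy, z, hz, hgap⟩ := hcon (max r 1) hpos1
    have hrle : r ≤ max r 1 := le_max_left r 1
    rcases le_total (f z) (f y) with hle | hle
    · refine ⟨(y, z), ⟨x, hy, hz⟩, ?_⟩
      have : |f y - f z| = f y - f z := abs_of_nonneg (by linarith)
      dsimp only
      linarith [this ▸ hgap]
    · refine ⟨(z, y), ⟨x, hz, hy⟩, ?_⟩
      have : |f y - f z| = f z - f y := by
        rw [abs_sub_comm]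
        exact abs_of_nonneg (by linarith)
      dsimp only
      linarith [this ▸ hgap]
  choose W hWball hWgap using hW
  -- construct the separated sequences
  obtain ⟨a, b, hball, hs3, hs4⟩ : ∃ a b : ℕ → X,
      (∀ k, ∃ x, a k ∈ ball H {x} ∧ b k ∈ ball H {x}) ∧
      (∀ r : ℝ, ∃ K : ℕ, ∀ k, K ≤ k → ∀ j : ℕ, r < |f (a k) - f (b j)|) ∧
      (∀ M : ℝ, ∃ k, M < f (a k)) := by
    by_cases hP : ∃ M : ℝ, ∀ r : ℝ, ∃ ab : X × X,
        (∃ x, ab.1 ∈ ball H {x} ∧ ab.2 ∈ ball H {x}) ∧ r < f ab.1 - f ab.2 ∧ f ab.2 ≤ M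
    · -- Case 1: bottoms can be kept bounded
      obtain ⟨M, hM⟩ := hP
      choose W1 hW1b hW1g hW1M using hM
      set seq : ℕ → X × X :=
        fun k => Nat.rec (W1 (M + 1)) (fun k prev => W1 (f prev.1 + k + 1)) k with hseq
      have hseqS : ∀ k, seq (k + 1) = W1 (f (seq k).1 + k + 1) := fun k => rfl
      have inv1 : ∀ k : ℕ, M + k + 1 < f (seq k).1 := by
        intro k
        induction k with
        | zero =>
            have h1 := hW1g (M + 1)
            have h2 := hpos (W1 (M + 1)).2
            show M + ((0 : ℕ) : ℝ) + 1 < f (W1 (M + 1)).1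
            push_cast
            linarith
        | succ k ih =>
            have h1 := hW1g (f (seq k).1 + k + 1)
            have h2 := hpos (W1 (f (seq k).1 + k + 1)).2
            show M + ((k + 1 : ℕ) : ℝ) + 1 < f (W1 (f (seq k).1 + k + 1)).1
            push_cast
            linarith
      have hbot : ∀ j : ℕ, f (seq j).2 ≤ M := by
        intro j
        cases j with
        | zero => exact hW1M (M + 1)
        | succ j => exact hW1M (f (seq j).1 + j + 1)
      refine ⟨fun k => (seq k).1, fun k => (seq k).2, ?_, ?_, ?_⟩
      · intro k
        cases k with
        | zero => exact hW1b (M + 1)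
        | succ k => exact hW1b (f (seq k).1 + k + 1)
      · intro r
        obtain ⟨K, hK⟩ := exists_nat_gt r
        refine ⟨K, fun k hk j => ?_⟩
        have h1 := inv1 k
        have h2 := hbot j
        have h3 : r < f (seq k).1 - f (seq j).2 := by
          have : (K : ℝ) ≤ (k : ℝ) := by exact_mod_cast hk
          linarith
        exact h3.trans_le (le_abs_self _)
      · intro M'
        obtain ⟨k, hk⟩ := exists_nat_gt (M' - M - 1)
        exact ⟨k, by have := inv1 k; linarith⟩
    · -- Case 2: bottoms escape to infinity
      push_neg at hP
      choose R hR using hP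
      set seq : ℕ → X × X :=
        fun k => Nat.rec (W 0) (fun k prev => W (max (R (f prev.1 + k + 1)) (k + 1))) k
          with hseq
      have hseqS : ∀ k, seq (k + 1) = W (max (R (f (seq k).1 + k + 1)) (k + 1)) :=
        fun k => rfl
      have c2a : ∀ k : ℕ, (k : ℝ) < f (seq k).1 - f (seq k).2 := by
        intro k
        cases k with
        | zero => exact_mod_cast hWgap 0
        | succ k =>
            have h1 := hWgap (max (R (f (seq k).1 + k + 1)) (k + 1))
            have h2 : ((k + 1 : ℕ) : ℝ) ≤ max (R (f (seq k).1 + k + 1)) (k + 1) := by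
              push_cast
              exact le_max_right _ _
            rw [hseqS k]
            exact h2.trans_lt h1
      have c2b : ∀ k : ℕ, f (seq k).1 + k + 1 < f (seq (k + 1)).2 := by
        intro k
        have h1 := hWgap (max (R (f (seq k).1 + k + 1)) (k + 1))
        have h2 : R (f (seq k).1 + k + 1) <
            f (W (max (R (f (seq k).1 + k + 1)) (k + 1))).1 -
              f (W (max (R (f (seq k).1 + k + 1)) (k + 1))).2 :=
          (le_max_left _ _).trans_lt h1
        have h3 := hR (f (seq k).1 + k + 1) (W (max (R (f (seq k).1 + k + 1)) (k + 1)))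
          (hWball _) h2
        rw [hseqS k]
        exact h3
      have amono' : ∀ k : ℕ, f (seq k).1 + k + 1 < f (seq (k + 1)).1 := by
        intro k
        have h1 := c2a (k + 1)
        have h2 := c2b k
        push_cast at h1
        linarith
      have amono : ∀ j k : ℕ, j ≤ k → f (seq j).1 ≤ f (seq k).1 := by
        intro j k hjk
        induction k with
        | zero => rw [Nat.le_zero.mp hjk]
        | succ k ih =>
            rcases Nat.lt_or_ge j (k + 1) with hlt | hge
            · have := amono' k
              have := ih (Nat.lt_succ_iff.mp hlt)
              linarith [amono' k]
            · rw [Nat.le_antisymm hjk hge]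
      have glow : ∀ k : ℕ, (k : ℝ) ≤ f (seq k).1 := by
        intro k
        induction k with
        | zero => exact_mod_cast hpos (seq 0).1
        | succ k ih =>
            have := amono' k
            push_cast
            linarith
      have sep1 : ∀ j k : ℕ, j ≤ k → f (seq j).2 + k < f (seq k).1 := by
        intro j k hjk
        rcases Nat.lt_or_ge j k with hlt | hge
        · obtain ⟨m, rfl⟩ := Nat.exists_eq_add_of_lt hlt
          have h1 : f (seq j).2 ≤ f (seq j).1 := by
            have := c2a j
            have := hpos (seq j).2
            have hj : (0:ℝ) ≤ (j:ℝ) := Nat.cast_nonneg j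
            linarith
          have h2 : f (seq j).1 ≤ f (seq (j + m)).1 := amono j (j + m) (Nat.le_add_right _ _)
          have h3 := c2b (j + m)
          have h4 := c2a (j + m + 1)
          push_cast at h3 h4 ⊢
          linarith
        · have hjk' : j = k := Nat.le_antisymm hjk hge
          subst hjk'
          have := c2a j
          linarith
      have sep2 : ∀ k j : ℕ, k < j → f (seq k).1 + j < f (seq j).2 := by
        intro k j hkj
        obtain ⟨m, rfl⟩ := Nat.exists_eq_add_of_lt hkj
        have h1 : f (seq k).1 ≤ f (seq (k + m)).1 := amono k (k + m) (Nat.le_add_right _ _)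
        have h2 := c2b (k + m)
        push_cast at h2 ⊢
        linarith
      refine ⟨fun k => (seq k).1, fun k => (seq k).2, ?_, ?_, ?_⟩
      · intro k
        cases k with
        | zero => exact hWball 0
        | succ k => exact hWball (max (R (f (seq k).1 + k + 1)) (k + 1))
      · intro r
        obtain ⟨K, hK⟩ := exists_nat_gt r
        refine ⟨K, fun k hk j => ?_⟩
        have hKk : (K : ℝ) ≤ (k : ℝ) := by exact_mod_cast hk
        rcases Nat.lt_or_ge k j with hlt | hge
        · have h1 := sep2 k j hlt
          have hj : (K : ℝ) ≤ (j : ℝ) := by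
            have : K ≤ j := hk.trans hlt.le
            exact_mod_cast this
          have h2 : f (seq j).2 - f (seq k).1 ≤ |f (seq k).1 - f (seq j).2| := by
            rw [abs_sub_comm]
            exact le_abs_self _
          linarith
        · have h1 := sep1 j k hge
          have : r < f (seq k).1 - f (seq j).2 := by linarith
          exact this.trans_le (le_abs_self _)
      · intro M
        obtain ⟨k, hk⟩ := exists_nat_gt M
        exact ⟨k, hk.trans_le (glow k)⟩
  -- the sets A and B
  set A : Set X := Set.range a with hA
  set B : Set X := Set.range b with hB
  have hAubC : ¬C.IsBounded A := by
    intro hb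
    obtain ⟨M, hM⟩ := macroUniform_bounded_on hf hb
    obtain ⟨k, hk⟩ := hs4 M
    exact absurd (hM (a k) ⟨k, rfl⟩) (not_le.mpr hk)
  have hAubC' : ¬C'.IsBounded A := fun hb =>
    hAubC ((bounded_iff_of_lambdaEquiv h).mpr hb)
  have hK₀ : comp (inv H) H ∈ C'.sets :=
    comp_mem'' C' (inv_mem' C' hH) hH
  have hABclose : A ⊆ ball (comp (inv H) H) B := by
    rintro p ⟨k, rfl⟩
    obtain ⟨x, hxa, hxb⟩ := hball k
    exact ⟨b k, ⟨k, rfl⟩, x, show (x, b k) ∈ H from mem_ball_singleton.mp hxb,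
      mem_ball_singleton.mp hxa⟩
  have hBAclose : B ⊆ ball (comp (inv H) H) A := by
    rintro p ⟨k, rfl⟩
    obtain ⟨x, hxa, hxb⟩ := hball k
    exact ⟨a k, ⟨k, rfl⟩, x, show (x, a k) ∈ H from mem_ball_singleton.mp hxa,
      mem_ball_singleton.mp hxb⟩
  have hBubC' : ¬C'.IsBounded B := fun hb =>
    hAubC' (bounded_of_subset_ball hK₀ hABclose hb)
  have hlink' : C'.Linked A B :=
    Or.inr ⟨A, B, subset_rfl, subset_rfl, hAubC', hBubC',
      ⟨comp (inv H) H, hK₀, hABclose, hBAclose⟩⟩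
  have hlink : C.Linked A B := (h A B).mpr hlink'
  rcases hlink with ⟨hAb, -⟩ | ⟨A'', B'', hA''s, hB''s, hA''ub, hB''ub, E, hE, hAb, hBb⟩
  · exact hAubC hAb
  obtain ⟨r, hrpos, hr⟩ := hf E hE
  obtain ⟨K, hK⟩ := hs3 r
  have hex : ∃ k, K ≤ k ∧ a k ∈ A'' := by
    by_contra hno
    push_neg at hno
    apply hA''ub
    apply bounded_subset (bounded_finite C ((Set.finite_Iio K).image a))
    intro p hp
    obtain ⟨k, rfl⟩ := hA''s hp
    refine ⟨k, ?_, rfl⟩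
    by_contra hKk
    exact hno k (not_lt.mp (fun hc => hKk hc)) hp
  obtain ⟨k, hKk, hkA⟩ := hex
  obtain ⟨b', hb', hba⟩ := hAb hkA
  obtain ⟨j, rfl⟩ := hB''s hb'
  have h1 : a k ∈ ball E {b j} := mem_ball_singleton.mpr hba
  have h2 : b j ∈ ball E {b j} := mem_ball_singleton.mpr (C.diagonal_subset E hE rfl)
  exact absurd (hr (b j) (a k) h1 (b j) h2) (not_le.mpr (hK k hKk j))

end Transfer

section OfFun

/-- The coarse structure induced by a real-valued function. -/
def ofFun (f : X → ℝ) : CoarseStruct X where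
  sets := {E | Set.diagonal X ⊆ E ∧ ∃ r : ℝ, ∀ p ∈ E, |f p.1 - f p.2| ≤ r}
  diagonal_mem := by
    refine ⟨subset_rfl, 0, ?_⟩
    rintro ⟨x, y⟩ hp
    have : x = y := hp
    simp [this]
  diagonal_subset := fun E hE => hE.1
  comp_mem := by
    rintro E ⟨hEd, rE, hEr⟩ F ⟨hFd, rF, hFr⟩
    refine ⟨?_, rE + rF, ?_⟩
    · rintro ⟨x, y⟩ hp
      have hxy : x = y := hp
      subst hxy
      exact ⟨x, hEd rfl, hFd rfl⟩
    · rintro ⟨x, y⟩ ⟨z, hz1, hz2⟩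
      calc |f x - f y| ≤ |f x - f z| + |f z - f y| := abs_sub_le _ _ _
        _ ≤ rE + rF := add_le_add (hEr (x, z) hz1) (hFr (z, y) hz2)
  inv_mem := by
    rintro E ⟨hEd, rE, hEr⟩
    refine ⟨?_, rE, ?_⟩
    · rintro ⟨x, y⟩ hp
      have hxy : x = y := hp
      subst hxy
      exact hEd rfl
    · rintro ⟨x, y⟩ hp
      rw [abs_sub_comm]
      exact hEr (y, x) hp
  subset_mem := by
    rintro E ⟨hEd, rE, hEr⟩ E' hd hsub
    exact ⟨hd, rE, fun p hp => hEr p (hsub hp)⟩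
  cover := by
    intro p
    refine ⟨insert p (Set.diagonal X), ⟨?_, |f p.1 - f p.2|, ?_⟩, Set.mem_insert _ _⟩
    · exact Set.subset_insert _ _
    · rintro ⟨x, y⟩ (hq | hq)
      · rw [hq]
      · have hxy : x = y := hq
        simp [hxy]

lemma ofFun_not_bounded {f : X → ℝ} (hf : ∀ M : ℝ, ∃ x, M < f x) :
    ¬(ofFun f).IsBounded Set.univ := by
  rintro ⟨E, ⟨-, r, hr⟩, x, hx⟩
  obtain ⟨y, hy⟩ := hf (f x + r)
  have h1 : (x, y) ∈ E := mem_ball_singleton.mp (hx (Set.mem_univ y))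
  have h2 := hr (x, y) h1
  have := abs_le.mp h2
  simp only at this
  linarith [this.2]

lemma ofFun_metrizable (f : X → ℝ) : (ofFun f).Metrizable := by
  refine ⟨Set.range (fun n : ℕ => {p : X × X | |f p.1 - f p.2| ≤ (n : ℝ)}),
    Set.countable_range _, ?_, ?_⟩
  · rintro E ⟨n, rfl⟩
    refine ⟨?_, n, fun p hp => hp⟩
    rintro ⟨x, y⟩ hp
    have hxy : x = y := hp
    simp [hxy]
  · rintro E ⟨-, r, hr⟩
    obtain ⟨n, hn⟩ := exists_nat_ge r
    exact ⟨_, ⟨n, rfl⟩, fun p hp => (hr p hp).trans hn⟩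

lemma subset_ofFun {C : CoarseStruct X} {f : X → ℝ} (hf : C.MacroUniform f) :
    C.sets ⊆ (ofFun f).sets := by
  intro E hE
  obtain ⟨r, -, hr⟩ := hf E hE
  refine ⟨C.diagonal_subset E hE, r, ?_⟩
  rintro ⟨x, y⟩ hp
  rw [abs_sub_comm]
  exact hr x y (mem_ball_singleton.mpr hp) x
    (mem_ball_singleton.mpr (C.diagonal_subset E hE rfl))

end OfFun

end LamStable

/-- The class of submetrizable coarse spaces is λ-stable. -/
theorem submetrizable_lambdaStable {X : Type*} (C C' : CoarseStruct X)
    (hC : C.Submetrizable) (h : CoarseStruct.LambdaEquiv C C') :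
    C'.Submetrizable := by
  classical
  rcases isEmpty_or_nonempty X with hX | hX
  · -- the degenerate empty case
    have hnb : ¬C'.IsBounded Set.univ := by
      rintro ⟨E, -, x, -⟩
      exact hX.false x
    refine ⟨hnb, C', subset_rfl, hnb, ?_⟩
    refine ⟨{Set.diagonal X}, Set.countable_singleton _, ?_, ?_⟩
    · simpa using C'.diagonal_mem
    · intro E hE
      refine ⟨Set.diagonal X, Set.mem_singleton _, ?_⟩
      rintro ⟨x, y⟩ -
      exact (hX.false x).elim
  · obtain ⟨hCub, C'', hsub, hC''ub, hmet⟩ := hC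
    obtain ⟨f, hfmu, hfunb, hfpos⟩ := LamStable.exists_macroUniform C'' hC''ub hmet
    have hfC : C.MacroUniform f := fun E hE => hfmu E (hsub hE)
    have hfC' : C'.MacroUniform f := LamStable.macroUniform_transfer h hfC hfpos
    refine ⟨?_, LamStable.ofFun f, LamStable.subset_ofFun hfC',
      LamStable.ofFun_not_bounded hfunb, LamStable.ofFun_metrizable f⟩
    intro hb
    exact hCub ((LamStable.bounded_iff_of_lambdaEquiv h).mpr hb)
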